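/- Let (𝓔ₙ⁰)_{n∈ℕ} satisfy hypotheses A₁ and A₃ with 𝓖(𝓔₀⁰) edgeless, let (Mₙ)_{n≥1} satisfy hypotheses B₁, B₂ and B₃, let Ψ = lim Ψₙ and K = ⋂ₙ Eₙ⁰. Then hypothesis B₄ is satisfied if and only if Ψ⁻¹(K) has empty interior in M. -/

import Mathlib

open Set Function MeasureTheory Topology Filter

noncomputable section

variable {M : Type*}

section Defs
variable [TopologicalSpace M]

/-- A rectangle of `M`: a subset homeomorphic to the closed unit ball of `ℝ^d`. -/
def IsRectangle (d : ℕ) (X : Set M) : Prop :=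
  Nonempty (X ≃ₜ (Metric.closedBall (0 : EuclideanSpace ℝ (Fin d)) 1 :
    Set (EuclideanSpace ℝ (Fin d))))

/-- A collection of rectangles: a finite family of pairwise disjoint rectangles. -/
def IsRectCollection (d : ℕ) (𝓔 : Set (Set M)) : Prop :=
  𝓔.Finite ∧ (∀ X ∈ 𝓔, IsRectangle d X) ∧ 𝓔.Pairwise Disjoint

/-- The union `E` of the rectangles of a collection `𝓔`. -/
def collUnion (𝓔 : Set (Set M)) : Set M := ⋃₀ 𝓔

/-- The collection `𝓔ⁿ = ⋃_{|k| ≤ n} R^k(𝓔)`. -/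
def iterColl (R : M ≃ₜ M) (𝓔 : Set (Set M)) (n : ℕ) : Set (Set M) :=
  {Y | ∃ k : ℤ, |k| ≤ (n : ℤ) ∧ ∃ X ∈ 𝓔, Y = (R.toEquiv ^ k) '' X}

/-- `𝓔` is `p` times iterable. -/
def IterableColl (R : M ≃ₜ M) (𝓔 : Set (Set M)) (p : ℕ) : Prop :=
  ∀ X ∈ 𝓔, ∀ X' ∈ 𝓔, ∀ k l : ℤ, |k| ≤ (p : ℤ) → |l| ≤ (p : ℤ) →
    Disjoint ((R.toEquiv ^ k) '' X) ((R.toEquiv ^ l) '' X') ∨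
      (R.toEquiv ^ k) '' X = (R.toEquiv ^ l) '' X'

/-- The oriented graph `𝓖(𝓔)` (vertices the elements of `𝓔`, an edge from `X` to `R(X)`)
has no cycle. -/
def HasNoCycle (R : M ≃ₜ M) (𝓔 : Set (Set M)) : Prop :=
  ¬ ∃ (X : Set M) (p : ℕ), X ∈ 𝓔 ∧ 1 ≤ p ∧
      (∀ i : ℕ, i ≤ p → (R.toEquiv ^ (i : ℤ)) '' X ∈ 𝓔) ∧ (R.toEquiv ^ (p : ℤ)) '' X = X

/-- The oriented graph `𝓖(𝓔)` has no edge. -/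
def EdgelessGraph (R : M ≃ₜ M) (𝓔 : Set (Set M)) : Prop :=
  ∀ X ∈ 𝓔, (R : M → M) '' X ∉ 𝓔

/-- `𝓕` refines `𝓔`. -/
def Refines (𝓕 𝓔 : Set (Set M)) : Prop :=
  (∀ X ∈ 𝓔, ∃ Y ∈ 𝓕, Y ⊆ X) ∧
    ∀ X ∈ 𝓔, ∀ Y ∈ 𝓕, Disjoint X Y ∨ Y ⊆ interior X

/-- `𝓕` is compatible with `𝓔` for `p` iterates. -/
def CompatibleFor (R : M ≃ₜ M) (𝓕 𝓔 : Set (Set M)) (p : ℕ) : Prop :=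
  collUnion 𝓕 ⊆ collUnion 𝓔 ∧
    ∀ k : ℤ, |k| ≤ 2 * (p : ℤ) + 1 →
      (R.toEquiv ^ k) '' collUnion 𝓕 ∩ collUnion 𝓔 ⊆ collUnion 𝓕

/-- Hypothesis A₁. -/
def HypA1 (R : M ≃ₜ M) (𝓔 : ℕ → Set (Set M)) : Prop :=
  (∀ n, IterableColl R (𝓔 n) (n + 1) ∧ HasNoCycle R (iterColl R (𝓔 n) n)) ∧
  (∀ m n, m < n → Refines (iterColl R (𝓔 n) (n + 1)) (iterColl R (𝓔 m) (m + 1))) ∧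
  (∀ n, CompatibleFor R (𝓔 (n + 1)) (𝓔 n) (n + 1))

/-- Hypothesis A₂ (no isolated point). -/
def HypA2 (𝓔 : ℕ → Set (Set M)) : Prop :=
  ∀ n, ∀ X ∈ 𝓔 n, ∃ Y ∈ 𝓔 (n + 1), ∃ Z ∈ 𝓔 (n + 1), Y ≠ Z ∧ Y ⊆ X ∧ Z ⊆ X

/-- The set `K = ⋂ₙ Eₙ⁰`. -/
def limitK (𝓔 : ℕ → Set (Set M)) : Set M := ⋂ n, collUnion (𝓔 n)

/-- `Ψₙ = Mₙ ∘ ⋯ ∘ M₁`, `Ψ₀ = id`. -/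
def Psi (Mseq : ℕ → M ≃ₜ M) : ℕ → M ≃ₜ M
  | 0 => Homeomorph.refl M
  | n + 1 => (Psi Mseq n).trans (Mseq (n + 1))

/-- `gₙ = Ψₙ⁻¹ ∘ R ∘ Ψₙ`. -/
def gSeq (R : M ≃ₜ M) (Mseq : ℕ → M ≃ₜ M) (n : ℕ) : M ≃ₜ M :=
  ((Psi Mseq n).trans R).trans (Psi Mseq n).symm

/-- The support of a homeomorphism. -/
def homeoSupport (f : M ≃ₜ M) : Set M := closure {x | f x ≠ x}

/-- Hypothesis B₁ (support). -/
def HypB1 (R : M ≃ₜ M) (𝓔 : ℕ → Set (Set M)) (Mseq : ℕ → M ≃ₜ M) : Prop :=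
  ∀ n : ℕ, homeoSupport (Mseq (n + 1)) ⊆ collUnion (iterColl R (𝓔 n) n)

/-- Hypothesis B₂ (commutation). -/
def HypB2 (R : M ≃ₜ M) (𝓔 : ℕ → Set (Set M)) (Mseq : ℕ → M ≃ₜ M) : Prop :=
  ∀ n : ℕ, ∀ X ∈ iterColl R (𝓔 n) n, (R : M → M) '' X ∈ iterColl R (𝓔 n) n →
    ∀ x ∈ X, Mseq (n + 1) (R x) = R (Mseq (n + 1) x)

end Defs

section MetricDefs
variable [MetricSpace M]

/-- Hypothesis A₃ (decay of the collections of rectangles). -/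
def HypA3 (R : M ≃ₜ M) (𝓔 : ℕ → Set (Set M)) : Prop :=
  ∀ ε : ℝ, 0 < ε → ∃ N : ℕ, ∀ n ≥ N, ∀ X ∈ iterColl R (𝓔 n) n, Metric.diam X ≤ ε

/-- Hypothesis B₃ (convergence). -/
def HypB3 (R : M ≃ₜ M) (𝓔 : ℕ → Set (Set M)) (Mseq : ℕ → M ≃ₜ M) : Prop :=
  ∀ ε : ℝ, 0 < ε → ∃ N : ℕ, ∀ n ≥ N,
    ∀ X ∈ iterColl R (𝓔 (n + 1)) (n + 2) \ iterColl R (𝓔 (n + 1)) n,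
      Metric.diam ((Psi Mseq n) ⁻¹' X) ≤ ε

/-- Hypothesis B₄ (fibres are thin): the internal radius of `Ψₙ⁻¹(Eₙ⁰)` tends to `0`. -/
def HypB4 (𝓔 : ℕ → Set (Set M)) (Mseq : ℕ → M ≃ₜ M) : Prop :=
  ∀ ε : ℝ, 0 < ε → ∃ N : ℕ, ∀ n ≥ N, ∀ (x : M) (r : ℝ),
    Metric.ball x r ⊆ (Psi Mseq n) ⁻¹' collUnion (𝓔 n) → r ≤ ε

end MetricDefs

section TopDefs
variable [TopologicalSpace M]

/-- A Cantor set in `M`. -/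
def IsCantorSet (K : Set M) : Prop :=
  K.Nonempty ∧ IsCompact K ∧ Perfect K ∧ IsTotallyDisconnected K

/-- A totally disconnected compact set is tamely embedded if it admits arbitrarily small
neighbourhoods that are finite unions of pairwise disjoint rectangles. -/
def TamelyEmbedded (d : ℕ) (Q : Set M) : Prop :=
  ∀ U : Set M, IsOpen U → Q ⊆ U →
    ∃ 𝓑 : Set (Set M), IsRectCollection d 𝓑 ∧ Q ⊆ interior (collUnion 𝓑) ∧ collUnion 𝓑 ⊆ U

/-- A Cantor set is dynamically coherent for `R`. -/
def DynamicallyCoherent (R : M ≃ₜ M) (K : Set M) : Prop :=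
  (∀ k : ℤ, ∃ U : Set M, IsOpen U ∧ (R.toEquiv ^ k) '' K ∩ K = U ∩ K) ∧
  ∀ p : ℕ, ∀ x ∈ K,
    (∃ k : ℕ, 1 ≤ k ∧ ∀ i : ℕ, k ≤ i → i ≤ k + p → (R.toEquiv ^ (i : ℤ)) x ∉ K) ∧
    (∃ l : ℕ, 1 ≤ l ∧ ∀ i : ℕ, l ≤ i → i ≤ l + p → (R.toEquiv ^ (-(i : ℤ))) x ∉ K)

/-- A Cantor set is dynamically meagre for `R`: it has empty interior in
`Λ = Cl(⋃ᵢ Rⁱ(K))`. -/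
def DynamicallyMeagre (R : M ≃ₜ M) (K : Set M) : Prop :=
  ∀ U : Set M, IsOpen U → U ∩ closure (⋃ i : ℤ, (R.toEquiv ^ i) '' K) ⊆ K →
    U ∩ closure (⋃ i : ℤ, (R.toEquiv ^ i) '' K) = ∅

/-- `R` is minimal on the invariant set `Λ` (every orbit of a point of `Λ` is dense in `Λ`). -/
def MinimalOnSet (R : M ≃ₜ M) (Λ : Set M) : Prop :=
  ∀ x ∈ Λ, Λ ⊆ closure (Set.range fun n : ℤ => (R.toEquiv ^ n) x)

/-- `R` is transitive on the invariant set `Λ` (some orbit is dense in `Λ`). -/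
def TransitiveOnSet (R : M ≃ₜ M) (Λ : Set M) : Prop :=
  ∃ x ∈ Λ, Λ ⊆ closure (Set.range fun n : ℤ => (R.toEquiv ^ n) x)

end TopDefs

/-- The support of a measure. -/
def measSupport {M : Type*} [TopologicalSpace M] [MeasurableSpace M] (μ : Measure M) : Set M :=
  {x | ∀ U : Set M, IsOpen U → x ∈ U → 0 < μ U}

/-- The measurable dynamical system `S` restricted to the `S`-invariant set `A` is isomorphic
to the system `T` restricted to the `T`-invariant set `B`, in the sense of Béguin–Crovisier–Le
Roux: there are full invariant subsets `X₀ ⊆ A`, `Y₀ ⊆ B` and a bijective bimeasurable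
conjugacy between them. -/
def MeasIsoOn {X Y : Type*} [MeasurableSpace X] [MeasurableSpace Y]
    (S : X → X) (A : Set X) (T : Y → Y) (B : Set Y) : Prop :=
  ∃ (X₀ : Set X) (Y₀ : Set Y) (Θ : X → Y),
    X₀ ⊆ A ∧ Y₀ ⊆ B ∧ MeasurableSet X₀ ∧ MeasurableSet Y₀ ∧
    S '' X₀ = X₀ ∧ T '' Y₀ = Y₀ ∧
    (∀ μ : Measure X, IsProbabilityMeasure μ → Measure.map S μ = μ → μ A = 1 → μ X₀ = 1) ∧
    (∀ ν : Measure Y, IsProbabilityMeasure ν → Measure.map T ν = ν → ν B = 1 → ν Y₀ = 1) ∧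
    Set.BijOn Θ X₀ Y₀ ∧
    (∀ V : Set Y, MeasurableSet V → MeasurableSet (X₀ ∩ Θ ⁻¹' V)) ∧
    (∀ U : Set X, MeasurableSet U → MeasurableSet (Θ '' (X₀ ∩ U))) ∧
    (∀ x ∈ X₀, Θ (S x) = T (Θ x))


section MyAux

open Metric

variable {N : Type*} [MetricSpace N]

/-- `R.toEquiv ^ k` comes from a homeomorphism. -/
lemma exists_homeo_zpow (R : N ≃ₜ N) (k : ℤ) :
    ∃ h : N ≃ₜ N, ⇑h = ⇑(R.toEquiv ^ k) := by
  suffices h : ∃ h : N ≃ₜ N, h.toEquiv = R.toEquiv ^ k by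
    obtain ⟨h, hh⟩ := h
    exact ⟨h, by rw [← hh]; rfl⟩
  induction k using Int.induction_on with
  | zero => exact ⟨Homeomorph.refl N, rfl⟩
  | succ n ih =>
    obtain ⟨h, hh⟩ := ih
    refine ⟨(R.trans h), ?_⟩
    rw [zpow_add_one]
    ext x
    simp [Equiv.Perm.mul_apply, ← hh]
  | pred n ih =>
    obtain ⟨h, hh⟩ := ih
    refine ⟨(R.symm.trans h), ?_⟩
    rw [zpow_sub_one]
    ext x
    simp [Equiv.Perm.mul_apply, ← hh]

lemma isRectangle_props {d : ℕ} {X : Set N} (h : IsRectangle d X) :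
    X.Nonempty ∧ IsCompact X ∧ IsConnected X := by
  obtain ⟨e⟩ := h
  set B := (Metric.closedBall (0 : EuclideanSpace ℝ (Fin d)) 1 :
    Set (EuclideanSpace ℝ (Fin d))) with hB
  have hBne : B.Nonempty := ⟨0, by simp [hB]⟩
  have hBcpt : IsCompact B := isCompact_closedBall _ _
  have hBconn : IsConnected B := (convex_closedBall _ _).isConnected hBne
  haveI : CompactSpace ↥B := isCompact_iff_compactSpace.mp hBcpt
  haveI : ConnectedSpace ↥B := isConnected_iff_connectedSpace.mp hBconn
  haveI : Nonempty ↥B := hBne.to_subtype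
  refine ⟨?_, ?_, ?_⟩
  · exact nonempty_subtype.mp e.toEquiv.nonempty
  · exact isCompact_iff_compactSpace.mpr e.symm.compactSpace
  · have h1 : IsConnected (Set.range (Subtype.val ∘ ⇑e.symm)) :=
      isConnected_range (continuous_subtype_val.comp e.symm.continuous)
    have h2 : Set.range (Subtype.val ∘ ⇑e.symm) = X := by
      rw [Set.range_comp, e.symm.surjective.range_eq, Set.image_univ, Subtype.range_coe]
    rwa [h2] at h1

lemma mem_iterColl_of_mem {R : N ≃ₜ N} {𝓔 : Set (Set N)} {n : ℕ} {X : Set N} (hX : X ∈ 𝓔) :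
    X ∈ iterColl R 𝓔 n :=
  ⟨0, by simp, X, hX, by simp⟩

lemma iterColl_mono {R : N ≃ₜ N} {𝓔 : Set (Set N)} {m n : ℕ} (h : m ≤ n) :
    iterColl R 𝓔 m ⊆ iterColl R 𝓔 n := by
  rintro Y ⟨k, hk, X, hX, rfl⟩
  exact ⟨k, hk.trans (by exact_mod_cast h), X, hX, rfl⟩

lemma iterColl_finite {R : N ≃ₜ N} {𝓔 : Set (Set N)} (h : 𝓔.Finite) (n : ℕ) :
    (iterColl R 𝓔 n).Finite := by
  apply Set.Finite.subset (((Set.finite_Icc (-(n : ℤ)) n).prod h).image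
    (fun p : ℤ × Set N => (R.toEquiv ^ p.1) '' p.2))
  rintro Y ⟨k, hk, X, hX, rfl⟩
  exact ⟨(k, X), ⟨Set.mem_Icc.mpr (abs_le.mp hk), hX⟩, rfl⟩

lemma iterColl_props {d : ℕ} {R : N ≃ₜ N} {𝓔 : Set (Set N)} {n : ℕ}
    (hrect : ∀ X ∈ 𝓔, IsRectangle d X) {Y : Set N} (hY : Y ∈ iterColl R 𝓔 n) :
    Y.Nonempty ∧ IsCompact Y ∧ IsConnected Y := by
  obtain ⟨k, hk, X, hX, rfl⟩ := hY
  obtain ⟨h, hh⟩ := exists_homeo_zpow R k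
  rw [← hh]
  obtain ⟨hne, hcpt, hconn⟩ := isRectangle_props (hrect X hX)
  exact ⟨hne.image _, hcpt.image h.continuous, hconn.image _ h.continuous.continuousOn⟩

lemma collUnion_isClosed {𝓔 : Set (Set N)} (hfin : 𝓔.Finite)
    (hcl : ∀ X ∈ 𝓔, IsClosed X) : IsClosed (collUnion 𝓔) := by
  rw [collUnion, Set.sUnion_eq_biUnion]
  exact hfin.isClosed_biUnion hcl

lemma iterColl_disj_or_eq {R : N ≃ₜ N} {𝓔 : Set (Set N)} {p n : ℕ}
    (hit : IterableColl R 𝓔 p) (hn : n ≤ p) :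
    ∀ Y ∈ iterColl R 𝓔 n, ∀ Y' ∈ iterColl R 𝓔 n, Y = Y' ∨ Disjoint Y Y' := by
  rintro Y ⟨k, hk, X, hX, rfl⟩ Y' ⟨l, hl, X', hX', rfl⟩
  have hn' : (n : ℤ) ≤ p := by exact_mod_cast hn
  rcases hit X hX X' hX' k l (hk.trans hn') (hl.trans hn') with h | h
  · exact Or.inr h
  · exact Or.inl h

lemma homeoSupport_symm (f : N ≃ₜ N) : homeoSupport f.symm = homeoSupport f := by
  have hset : {x | f.symm x ≠ x} = {x | f x ≠ x} := by
    ext x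
    simp only [Set.mem_setOf_eq, ne_eq]
    constructor
    · intro h hc
      apply h
      conv_lhs => rw [← hc]
      exact f.symm_apply_apply x
    · intro h hc
      apply h
      conv_lhs => rw [← hc]
      exact f.apply_symm_apply x
  unfold homeoSupport
  rw [hset]

end MyAux
section StepSec
variable {N : Type*} [MetricSpace N]

omit [MetricSpace N] in
lemma mem_collUnion {𝓔 : Set (Set N)} {z : N} : z ∈ collUnion 𝓔 ↔ ∃ X ∈ 𝓔, z ∈ X :=
  Set.mem_sUnion

lemma step_lemma {d : ℕ} (R : N ≃ₜ N) (𝓔 : ℕ → Set (Set N))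
    (hrect : ∀ n, IsRectCollection d (𝓔 n)) (hA1 : HypA1 R 𝓔)
    (n k : ℕ) (hnk : n ≤ k)
    (f : N ≃ₜ N) (hsupp : homeoSupport f ⊆ collUnion (iterColl R (𝓔 k) k))
    (hfr : ∀ Y ∈ iterColl R (𝓔 k) k, (frontier Y).Nonempty)
    {x : N} (hx : x ∈ collUnion (𝓔 n)) : f x ∈ collUnion (𝓔 n) := by
  obtain ⟨h1, h2, _h3⟩ := hA1
  set 𝓘 : Set (Set N) := iterColl R (𝓔 k) k with h𝓘
  set E : Set N := collUnion 𝓘 with hE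
  have hIfin : 𝓘.Finite := iterColl_finite (hrect k).1 k
  have hprops : ∀ Y ∈ 𝓘, Y.Nonempty ∧ IsCompact Y ∧ IsConnected Y :=
    fun Y hY => iterColl_props (hrect k).2.1 hY
  have hpair : ∀ Y ∈ 𝓘, ∀ Y' ∈ 𝓘, Y = Y' ∨ Disjoint Y Y' :=
    iterColl_disj_or_eq (h1 k).1 (Nat.le_succ k)
  have hclosed_sUnion : ∀ 𝓕 : Set (Set N), 𝓕 ⊆ 𝓘 → IsClosed (⋃₀ 𝓕) := by
    intro 𝓕 hsub
    rw [Set.sUnion_eq_biUnion]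
    exact (hIfin.subset hsub).isClosed_biUnion fun Y hY => (hprops Y (hsub hY)).2.1.isClosed
  have hfix : ∀ z ∈ closure Eᶜ, f z = z := by
    intro z hz
    have hcl : IsClosed {z | f z = z} := isClosed_eq f.continuous continuous_id
    have hsub : Eᶜ ⊆ {z | f z = z} := by
      intro w hw
      by_contra hne
      exact hw (hsupp (subset_closure hne))
    exact closure_minimal hsub hcl hz
  have hmapE : ∀ z ∈ E, f z ∈ E := by
    intro z hz
    by_contra hfz
    have h2' : f (f z) = f z := hfix _ (subset_closure hfz)
    have h3' := f.injective h2'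
    rw [h3'] at hfz
    exact hfz hz
  have hdich : ∀ Y ∈ 𝓘, Y ⊆ collUnion (𝓔 n) ∨ ∀ z ∈ Y, z ∉ collUnion (𝓔 n) := by
    intro Y hY
    by_cases hmeet : ∃ z ∈ Y, z ∈ collUnion (𝓔 n)
    · left
      obtain ⟨z, hzY, hzU⟩ := hmeet
      obtain ⟨X, hX, hzX⟩ := mem_collUnion.mp hzU
      rcases Nat.lt_or_ge n k with hlt | hge
      · have href := h2 n k hlt
        have hYm : Y ∈ iterColl R (𝓔 k) (k + 1) := iterColl_mono (Nat.le_succ k) hY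
        have hXm : X ∈ iterColl R (𝓔 n) (n + 1) := mem_iterColl_of_mem hX
        rcases href.2 X hXm Y hYm with hd | hs
        · exact absurd hzY (Set.disjoint_left.mp hd hzX)
        · exact hs.trans (interior_subset.trans (Set.subset_sUnion_of_mem hX))
      · have hkn : n = k := le_antisymm hnk hge
        subst hkn
        obtain ⟨j, hj, X₀, hX₀, rfl⟩ := hY
        rcases (h1 n).1 X₀ hX₀ X hX j 0
            (hj.trans (by exact_mod_cast Nat.le_succ n))
            (by rw [abs_zero]; positivity) with hd | heq
        · exfalso
          have hzX0 : z ∈ (R.toEquiv ^ (0 : ℤ)) '' X := by simpa using hzX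
          exact Set.disjoint_left.mp hd hzY hzX0
        · rw [heq]
          intro w hw
          have hwX : w ∈ X := by simpa using hw
          exact Set.subset_sUnion_of_mem hX hwX
    · right
      push_neg at hmeet
      exact hmeet
  set 𝓐 : Set (Set N) := {Y ∈ 𝓘 | Y ⊆ collUnion (𝓔 n)} with h𝓐
  set 𝓑 : Set (Set N) := {Y ∈ 𝓘 | ¬ Y ⊆ collUnion (𝓔 n)} with h𝓑
  set A : Set N := ⋃₀ 𝓐 with hA
  set B : Set N := ⋃₀ 𝓑 with hB
  have hAcl : IsClosed A := hclosed_sUnion _ (Set.sep_subset _ _)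
  have hBcl : IsClosed B := hclosed_sUnion _ (Set.sep_subset _ _)
  have hABE : E ⊆ A ∪ B := by
    intro z hz
    obtain ⟨Y, hY, hzY⟩ := mem_collUnion.mp hz
    by_cases hc : Y ⊆ collUnion (𝓔 n)
    · exact Or.inl ⟨Y, ⟨hY, hc⟩, hzY⟩
    · exact Or.inr ⟨Y, ⟨hY, hc⟩, hzY⟩
  have hdisjAB : Disjoint A B := by
    rw [Set.disjoint_left]
    rintro z ⟨Y, ⟨hY, hYs⟩, hzY⟩ ⟨Y', ⟨hY', hY's⟩, hzY'⟩
    rcases hpair Y hY Y' hY' with heq | hd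
    · exact hY's (heq ▸ hYs)
    · exact Set.disjoint_left.mp hd hzY hzY'
  have hAsub : A ⊆ collUnion (𝓔 n) := Set.sUnion_subset fun Y hY => hY.2
  by_cases hxE : x ∈ E
  · obtain ⟨Y, hY, hxY⟩ := mem_collUnion.mp hxE
    have hYsub : Y ⊆ collUnion (𝓔 n) := by
      rcases hdich Y hY with h | h
      · exact h
      · exact absurd hx (h x hxY)
    obtain ⟨y, hyfr⟩ := hfr Y hY
    have hYcl : IsClosed Y := (hprops Y hY).2.1.isClosed
    have hyY : y ∈ Y := hYcl.frontier_subset hyfr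
    have hyfix : f y = y := by
      apply hfix
      by_contra hyc
      have hyint : y ∈ interior E := by
        have : y ∈ (closure Eᶜ)ᶜ := hyc
        rwa [closure_compl, compl_compl] at this
      have hyclYc : y ∈ closure Yᶜ := by
        rw [frontier_eq_closure_inter_closure] at hyfr
        exact hyfr.2
      have hyEY : y ∈ closure (E \ Y) := by
        rw [mem_closure_iff] at hyclYc ⊢
        intro O hO hyO
        obtain ⟨w, ⟨⟨hwO, hwint⟩, hwY⟩⟩ :=
          hyclYc (O ∩ interior E) (hO.inter isOpen_interior) ⟨hyO, hyint⟩
        exact ⟨w, hwO, ⟨interior_subset hwint, hwY⟩⟩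
      have hsub2 : E \ Y ⊆ ⋃₀ {Y' ∈ 𝓘 | Y' ≠ Y} := by
        rintro w ⟨hwE, hwY⟩
        obtain ⟨Y', hY', hwY'⟩ := mem_collUnion.mp hwE
        exact ⟨Y', ⟨hY', fun hh => hwY (hh ▸ hwY')⟩, hwY'⟩
      have hcl2 : IsClosed (⋃₀ {Y' ∈ 𝓘 | Y' ≠ Y}) := hclosed_sUnion _ (Set.sep_subset _ _)
      have hy2 : y ∈ ⋃₀ {Y' ∈ 𝓘 | Y' ≠ Y} := by
        have hmono := closure_mono hsub2 hyEY
        rwa [hcl2.closure_eq] at hmono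
      obtain ⟨Y', ⟨hY', hY'ne⟩, hyY'⟩ := hy2
      rcases hpair Y hY Y' hY' with heq | hd
      · exact hY'ne heq.symm
      · exact Set.disjoint_left.mp hd hyY hyY'
    have hCconn : IsConnected (f '' Y) := (hprops Y hY).2.2.image f f.continuous.continuousOn
    have hYE : Y ⊆ E := Set.subset_sUnion_of_mem hY
    have hCE : f '' Y ⊆ A ∪ B := by
      rintro z ⟨w, hw, rfl⟩
      exact hABE (hmapE w (hYE hw))
    obtain ⟨U, V, hU, hV, hAU, hBV, hUV⟩ := normal_separation hAcl hBcl hdisjAB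
    have hCU : f '' Y ⊆ U :=
      hCconn.isPreconnected.subset_left_of_subset_union hU hV hUV
        (hCE.trans (Set.union_subset_union hAU hBV))
        ⟨y, ⟨y, hyY, hyfix⟩, hAU ⟨Y, ⟨hY, hYsub⟩, hyY⟩⟩
    have hCA : f '' Y ⊆ A := by
      intro z hz
      rcases hCE hz with h | h
      · exact h
      · exact absurd (hBV h) fun hv => Set.disjoint_left.mp hUV (hCU hz) hv
    exact hAsub (hCA ⟨x, hxY, rfl⟩)
  · have hfx : f x = x := hfix x (subset_closure hxE)
    rw [hfx]
    exact hx

end StepSec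
section ChainSec
variable {N : Type*} [MetricSpace N]

lemma step_iff {d : ℕ} (R : N ≃ₜ N) (𝓔 : ℕ → Set (Set N))
    (hrect : ∀ n, IsRectCollection d (𝓔 n)) (hA1 : HypA1 R 𝓔)
    (Mseq : ℕ → N ≃ₜ N) (hB1 : HypB1 R 𝓔 Mseq)
    (n k : ℕ) (hnk : n ≤ k)
    (hfr : ∀ Y ∈ iterColl R (𝓔 k) k, (frontier Y).Nonempty) (x : N) :
    Mseq (k + 1) x ∈ collUnion (𝓔 n) ↔ x ∈ collUnion (𝓔 n) := by
  constructor
  · intro h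
    have hs : homeoSupport (Mseq (k + 1)).symm ⊆ collUnion (iterColl R (𝓔 k) k) := by
      rw [homeoSupport_symm]; exact hB1 k
    have hstep := step_lemma R 𝓔 hrect hA1 n k hnk (Mseq (k + 1)).symm hs hfr h
    simpa using hstep
  · exact fun h => step_lemma R 𝓔 hrect hA1 n k hnk (Mseq (k + 1)) (hB1 k) hfr h

lemma psi_chain {d : ℕ} (R : N ≃ₜ N) (𝓔 : ℕ → Set (Set N))
    (hrect : ∀ n, IsRectCollection d (𝓔 n)) (hA1 : HypA1 R 𝓔)
    (Mseq : ℕ → N ≃ₜ N) (hB1 : HypB1 R 𝓔 Mseq) (K0 : ℕ)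
    (hfr : ∀ k, K0 ≤ k → ∀ Y ∈ iterColl R (𝓔 k) k, (frontier Y).Nonempty)
    (n : ℕ) (hn : K0 ≤ n) (x : N) :
    ∀ m, n ≤ m → (Psi Mseq m x ∈ collUnion (𝓔 n) ↔ Psi Mseq n x ∈ collUnion (𝓔 n)) := by
  intro m hm
  induction m, hm using Nat.le_induction with
  | base => exact Iff.rfl
  | succ m hm ih =>
    have h1 : Psi Mseq (m + 1) x = Mseq (m + 1) (Psi Mseq m x) := rfl
    rw [h1, step_iff R 𝓔 hrect hA1 Mseq hB1 n m hm (hfr m (hn.trans hm)), ih]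

lemma collUnion_antitone {R : N ≃ₜ N} {𝓔 : ℕ → Set (Set N)} (hA1 : HypA1 R 𝓔) :
    ∀ a b : ℕ, a ≤ b → collUnion (𝓔 b) ⊆ collUnion (𝓔 a) := by
  intro a b hab
  induction b, hab using Nat.le_induction with
  | base => exact subset_rfl
  | succ b hb ih => exact (hA1.2.2 b).1.trans ih

lemma limitK_subset_interior {R : N ≃ₜ N} {𝓔 : ℕ → Set (Set N)} (hA1 : HypA1 R 𝓔) (n : ℕ) :
    limitK 𝓔 ⊆ interior (collUnion (𝓔 n)) := by
  intro z hz
  have hz1 : z ∈ collUnion (𝓔 (n + 1)) := Set.mem_iInter.mp hz (n + 1)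
  have hz0 : z ∈ collUnion (𝓔 n) := Set.mem_iInter.mp hz n
  obtain ⟨X', hX', hzX'⟩ := mem_collUnion.mp hz1
  obtain ⟨X, hX, hzX⟩ := mem_collUnion.mp hz0
  have href := hA1.2.1 n (n + 1) (Nat.lt_succ_self n)
  rcases href.2 X (mem_iterColl_of_mem hX) X' (mem_iterColl_of_mem hX') with hd | hs
  · exact absurd hzX' (Set.disjoint_left.mp hd hzX)
  · exact interior_mono (Set.subset_sUnion_of_mem hX) (hs hzX')

lemma collUnion_closed'' {d : ℕ} {𝓔 : ℕ → Set (Set N)}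
    (hrect : ∀ n, IsRectCollection d (𝓔 n)) (n : ℕ) : IsClosed (collUnion (𝓔 n)) :=
  collUnion_isClosed (hrect n).1
    (fun X hX => (isRectangle_props ((hrect n).2.1 X hX)).2.1.isClosed)

end ChainSec
section K0Sec
variable {N : Type*} [MetricSpace N]

lemma exists_ne_of_isOpen {d : ℕ} [ChartedSpace (EuclideanSpace ℝ (Fin d)) N]
    (hd : 1 ≤ d) {U : Set N} (hU : IsOpen U) {x : N} (hx : x ∈ U) : ∃ z ∈ U, z ≠ x := by
  set e := chartAt (EuclideanSpace ℝ (Fin d)) x with he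
  have hxe : x ∈ e.source := mem_chart_source _ x
  have hV : IsOpen (U ∩ e.source) := hU.inter e.open_source
  have himg : IsOpen (e '' (U ∩ e.source)) :=
    e.isOpen_image_of_subset_source hV Set.inter_subset_right
  have hpx : e x ∈ e '' (U ∩ e.source) := ⟨x, ⟨hx, hxe⟩, rfl⟩
  obtain ⟨r, hr, hball⟩ := Metric.isOpen_iff.mp himg _ hpx
  set v : EuclideanSpace ℝ (Fin d) := EuclideanSpace.single (⟨0, hd⟩ : Fin d) (1 : ℝ) with hv
  have hvnorm : ‖v‖ = 1 := by rw [hv, EuclideanSpace.norm_single]; simp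
  set q : EuclideanSpace ℝ (Fin d) := e x + (r / 2) • v with hq
  have hdist : dist q (e x) = r / 2 := by
    rw [hq, dist_eq_norm, add_sub_cancel_left, norm_smul, hvnorm, mul_one]
    rw [Real.norm_eq_abs, abs_of_pos (by positivity)]
  have hqball : q ∈ Metric.ball (e x) r := by
    rw [Metric.mem_ball, hdist]; linarith
  obtain ⟨z, hzmem, hez⟩ := hball hqball
  refine ⟨z, hzmem.1, fun hzx => ?_⟩
  have : dist q (e x) = 0 := by rw [← hez, hzx]; simp
  rw [hdist] at this
  linarith

lemma exists_K0 {d : ℕ} [CompactSpace N] [Nonempty N]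
    [ChartedSpace (EuclideanSpace ℝ (Fin d)) N] (hd : 1 ≤ d)
    (R : N ≃ₜ N) (𝓔 : ℕ → Set (Set N)) (hrect : ∀ n, IsRectCollection d (𝓔 n))
    (hA3 : HypA3 R 𝓔) :
    ∃ K0 : ℕ, ∀ k, K0 ≤ k → ∀ Y ∈ iterColl R (𝓔 k) k, (frontier Y).Nonempty := by
  haveI : LocallyConnectedSpace (EuclideanSpace ℝ (Fin d)) := inferInstance
  haveI : LocallyConnectedSpace N :=
    ChartedSpace.locallyConnectedSpace (EuclideanSpace ℝ (Fin d)) N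
  obtain ⟨t, ht⟩ := isCompact_univ.elim_finite_subcover
    (fun x : N => connectedComponent x) (fun _ => isOpen_connectedComponent)
    (fun z _ => Set.mem_iUnion.mpr ⟨z, mem_connectedComponent⟩)
  have htne : t.Nonempty := by
    rcases Finset.eq_empty_or_nonempty t with h | h
    · exfalso
      obtain ⟨z⟩ := (inferInstance : Nonempty N)
      have := ht (Set.mem_univ z)
      simp [h] at this
    · exact h
  set δ : ℝ := t.inf' htne (fun x => Metric.diam (connectedComponent x)) with hδ
  have hδpos : 0 < δ := by
    rw [hδ, Finset.lt_inf'_iff]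
    intro x _
    obtain ⟨z, hz, hzx⟩ :=
      exists_ne_of_isOpen hd isOpen_connectedComponent (mem_connectedComponent (x := x))
    have hbdd := (isClosed_connectedComponent (x := x)).isCompact.isBounded
    calc 0 < dist z x := dist_pos.mpr hzx
      _ ≤ Metric.diam (connectedComponent x) :=
        Metric.dist_le_diam_of_mem hbdd hz mem_connectedComponent
  obtain ⟨K0, hK0⟩ := hA3 (δ / 2) (by positivity)
  refine ⟨K0, fun k hk Y hY => ?_⟩
  by_contra hfre
  rw [Set.not_nonempty_iff_eq_empty] at hfre
  obtain ⟨hne, hcpt, hconn⟩ := iterColl_props (hrect k).2.1 hY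
  have hclosed : IsClosed Y := hcpt.isClosed
  have hYint : Y ⊆ interior Y := by
    intro z hz
    by_contra hzint
    have : z ∈ frontier Y := ⟨subset_closure hz, hzint⟩
    rw [hfre] at this
    exact this
  have hopen : IsOpen Y := by
    have : interior Y = Y := subset_antisymm interior_subset hYint
    rw [← this]; exact isOpen_interior
  obtain ⟨y, hy⟩ := hne
  have hYcomp : Y = connectedComponent y :=
    subset_antisymm (hconn.subset_connectedComponent hy)
      (IsClopen.connectedComponent_subset ⟨hclosed, hopen⟩ hy)
  have hyu := ht (Set.mem_univ y)
  rw [Set.mem_iUnion₂] at hyu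
  obtain ⟨x₀, hx₀t, hycomp⟩ := hyu
  have hcompeq : connectedComponent y = connectedComponent x₀ := (connectedComponent_eq hycomp).symm ▸ rfl
  have hdle : δ ≤ Metric.diam Y := by
    rw [hYcomp, hcompeq]
    exact Finset.inf'_le _ hx₀t
  have hdge : Metric.diam Y ≤ δ / 2 := hK0 k hk Y hY
  linarith

end K0Sec
section D0Sec
variable {N : Type*} [MetricSpace N]

lemma zpow_image_comp (R : N ≃ₜ N) (a b : ℤ) (S : Set N) :
    (R.toEquiv ^ a) '' ((R.toEquiv ^ b) '' S) = (R.toEquiv ^ (a + b)) '' S := by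
  rw [← Set.image_comp, ← Equiv.Perm.coe_mul, ← zpow_add]

lemma d0_discrete [ChartedSpace (EuclideanSpace ℝ (Fin 0)) N] : DiscreteTopology N := by
  haveI : Subsingleton (EuclideanSpace ℝ (Fin 0)) :=
    ⟨fun a b => PiLp.ext fun i => i.elim0⟩
  apply discreteTopology_iff_isOpen_singleton.mpr
  intro x
  set e := chartAt (EuclideanSpace ℝ (Fin 0)) x with he
  have hsrc : e.source = {x} := by
    apply subset_antisymm
    · intro z hz
      have h1 : e z = e x := Subsingleton.elim _ _
      exact e.injOn hz (mem_chart_source _ x) h1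
    · intro z hz
      rw [Set.mem_singleton_iff] at hz
      rw [hz]
      exact mem_chart_source _ x
  rw [← hsrc]
  exact e.open_source

lemma d0_empty [CompactSpace N] [ChartedSpace (EuclideanSpace ℝ (Fin 0)) N]
    (R : N ≃ₜ N) (𝓔 : ℕ → Set (Set N)) (hA1 : HypA1 R 𝓔) : ∀ n, 𝓔 n = ∅ := by
  haveI := d0_discrete (N := N)
  haveI : Finite N := finite_of_compact_of_discrete
  haveI : Fintype (Set N) := Fintype.ofFinite _
  intro n
  by_contra hne
  rw [← Ne, ← Set.nonempty_iff_ne_empty] at hne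
  obtain ⟨X, hX⟩ := hne
  set c := Fintype.card (Set N) with hc
  set m := n + c + 1 with hm
  have hmne : ∃ X', X' ∈ 𝓔 m := by
    have href := hA1.2.1 n m (by omega)
    obtain ⟨Y, hY, _⟩ := href.1 X (mem_iterColl_of_mem hX)
    obtain ⟨j, hj, X', hX', rfl⟩ := hY
    exact ⟨X', hX'⟩
  obtain ⟨X', hX'⟩ := hmne
  have hcard : Fintype.card (Set N) < Fintype.card (Fin (c + 1)) := by
    rw [Fintype.card_fin]
    omega
  obtain ⟨i, j, hij, heq⟩ := Fintype.exists_ne_map_eq_of_card_lt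
    (fun i : Fin (c + 1) => (R.toEquiv ^ ((i : ℕ) : ℤ)) '' X') hcard
  have key : ∀ a b : Fin (c + 1), (a : ℕ) < (b : ℕ) →
      (R.toEquiv ^ ((a : ℕ) : ℤ)) '' X' = (R.toEquiv ^ ((b : ℕ) : ℤ)) '' X' → False := by
    intro a b hab habeq
    set p := (b : ℕ) - (a : ℕ) with hp
    have hp1 : 1 ≤ p := by omega
    have hpm : p ≤ m := by
      have := b.2
      omega
    have hcyc : (R.toEquiv ^ (p : ℤ)) '' X' = X' := by
      have h1 : (R.toEquiv ^ (-((a : ℕ) : ℤ))) '' ((R.toEquiv ^ ((a : ℕ) : ℤ)) '' X')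
          = X' := by
        rw [zpow_image_comp, neg_add_cancel, zpow_zero]
        simp
      have h2 : (R.toEquiv ^ (-((a : ℕ) : ℤ))) '' ((R.toEquiv ^ ((b : ℕ) : ℤ)) '' X')
          = (R.toEquiv ^ (p : ℤ)) '' X' := by
        have hexp : (-((a : ℕ) : ℤ)) + ((b : ℕ) : ℤ) = (p : ℤ) := by omega
        rw [zpow_image_comp, hexp]
      rw [habeq] at h1
      rw [h2] at h1
      exact h1
    exact (hA1.1 m).2 ⟨X', p, mem_iterColl_of_mem hX', hp1, fun i hi =>
      ⟨(i : ℤ), by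
        rw [Int.abs_natCast]
        exact_mod_cast hi.trans hpm, X', hX', rfl⟩, hcyc⟩
  rcases Nat.lt_or_ge (i : ℕ) (j : ℕ) with h | h
  · exact key i j h heq
  · have hlt : (j : ℕ) < (i : ℕ) := by
      rcases Nat.lt_or_ge (j : ℕ) (i : ℕ) with h' | h'
      · exact h'
      · exact absurd (Fin.val_injective (le_antisymm h' h)) hij
    exact key j i hlt heq.symm

end D0Sec

/-- Hypothesis `B₄` holds if and only if `Ψ⁻¹(K)` has empty interior. -/
theorem hypB4_iff_empty_interior (d : ℕ) (M : Type*) [MetricSpace M] [CompactSpace M]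
    [ChartedSpace (EuclideanSpace ℝ (Fin d)) M]
    (R : M ≃ₜ M) (𝓔 : ℕ → Set (Set M)) (hrect : ∀ n, IsRectCollection d (𝓔 n))
    (hA1 : HypA1 R 𝓔) (hA3 : HypA3 R 𝓔) (hEdge : EdgelessGraph R (𝓔 0))
    (Mseq : ℕ → M ≃ₜ M)
    (hB1 : HypB1 R 𝓔 Mseq) (hB2 : HypB2 R 𝓔 Mseq) (hB3 : HypB3 R 𝓔 Mseq)
    (Ψ : M → M) (hΨc : Continuous Ψ)
    (hΨ : TendstoUniformly (fun n => ⇑(Psi Mseq n)) Ψ Filter.atTop) :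
    HypB4 𝓔 Mseq ↔ interior (Ψ ⁻¹' limitK 𝓔) = ∅ := by
  rcases isEmpty_or_nonempty M with hM | hM
  · constructor
    · intro _
      rw [Set.eq_empty_iff_forall_notMem]
      intro x _
      exact (hM.false x).elim
    · intro _ ε hε
      exact ⟨0, fun n _ x r _ => (hM.false x).elim⟩
  rcases Nat.eq_zero_or_pos d with hd0 | hd1
  · subst hd0
    have hempty := d0_empty R 𝓔 hA1
    have hK : limitK 𝓔 = ∅ := by
      rw [Set.eq_empty_iff_forall_notMem]
      intro z hz
      have h0 := Set.mem_iInter.mp hz 0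
      rw [hempty 0] at h0
      simp [collUnion] at h0
    constructor
    · intro _
      rw [hK]
      simp
    · intro _ ε hε
      refine ⟨0, fun n _ x r hball => ?_⟩
      have h1 : collUnion (𝓔 n) = ∅ := by rw [hempty n]; simp [collUnion]
      rw [h1] at hball
      have h2 : Metric.ball x r = ∅ := by
        rw [Set.eq_empty_iff_forall_notMem]
        intro z hz
        exact hball hz
      rw [Metric.ball_eq_empty] at h2
      linarith
  · obtain ⟨K0, hK0⟩ := exists_K0 hd1 R 𝓔 hrect hA3
    have hdec := collUnion_antitone hA1
    have hclosedE : ∀ n, IsClosed (collUnion (𝓔 n)) := collUnion_closed'' hrect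
    have hKint : ∀ n, limitK 𝓔 ⊆ interior (collUnion (𝓔 n)) := limitK_subset_interior hA1
    have hchain := psi_chain R 𝓔 hrect hA1 Mseq hB1 K0 hK0
    have hptwise : ∀ y, Filter.Tendsto (fun j => Psi Mseq j y) atTop (𝓝 (Ψ y)) :=
      fun y => hΨ.tendsto_at y
    constructor
    · intro hB4
      by_contra hint
      rw [← Ne, ← Set.nonempty_iff_ne_empty] at hint
      obtain ⟨x, hx⟩ := hint
      obtain ⟨r, hr, hball⟩ := Metric.isOpen_iff.mp isOpen_interior x hx
      obtain ⟨Nb, hNb⟩ := hB4 (r / 2) (by positivity)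
      set n := max Nb K0 with hn
      have hnK0 : K0 ≤ n := le_max_right _ _
      have hprem : Metric.ball x r ⊆ (Psi Mseq n) ⁻¹' collUnion (𝓔 n) := by
        intro y hy
        have hyK' : y ∈ Ψ ⁻¹' limitK 𝓔 := interior_subset (hball hy)
        have hyK : Ψ y ∈ limitK 𝓔 := hyK'
        have hyint : Ψ y ∈ interior (collUnion (𝓔 n)) := hKint n hyK
        have hev : ∀ᶠ j in atTop, Psi Mseq j y ∈ interior (collUnion (𝓔 n)) :=
          (hptwise y).eventually (isOpen_interior.mem_nhds hyint)
        obtain ⟨m, hmem, hmn⟩ := (hev.and (eventually_ge_atTop n)).exists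
        exact (hchain n hnK0 y m hmn).mp (interior_subset hmem)
      have := hNb n (le_max_left _ _) x r hprem
      linarith
    · intro hint
      by_contra hB4
      unfold HypB4 at hB4
      push_neg at hB4
      obtain ⟨ε, hε, hfreq⟩ := hB4
      have hfreq' : ∃ᶠ n in atTop,
          ∃ x : M, Metric.ball x ε ⊆ (Psi Mseq n) ⁻¹' collUnion (𝓔 n) := by
        rw [Filter.frequently_atTop]
        intro N
        obtain ⟨n, hnN, x, r, hsub, hr⟩ := hfreq N
        exact ⟨n, hnN, x, (Metric.ball_subset_ball hr.le).trans hsub⟩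
      obtain ⟨φ, hφmono, hφ⟩ := Filter.extraction_of_frequently_atTop hfreq'
      choose xseq hxseq using hφ
      obtain ⟨a, -, ψ, hψmono, hψtend⟩ :=
        isCompact_univ.tendsto_subseq (fun i => Set.mem_univ (xseq i))
      have hclaim : Metric.ball a (ε / 2) ⊆ Ψ ⁻¹' limitK 𝓔 := by
        intro y hy
        rw [Set.mem_preimage, limitK, Set.mem_iInter]
        have hya : dist y a < ε / 2 := Metric.mem_ball.mp hy
        have hmain : ∀ m, K0 ≤ m → Ψ y ∈ collUnion (𝓔 m) := by
          intro m hm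
          have hδ : 0 < ε / 2 - dist y a := by linarith
          obtain ⟨I, hI⟩ := Metric.tendsto_atTop.mp hψtend _ hδ
          set i := max I m with hi
          set n := φ (ψ i) with hnn
          have hnm : m ≤ n := by
            calc m ≤ i := le_max_right _ _
              _ ≤ ψ i := hψmono.le_apply
              _ ≤ φ (ψ i) := hφmono.le_apply
          have hyball : y ∈ Metric.ball (xseq (ψ i)) ε := by
            rw [Metric.mem_ball]
            have h1 := hI i (le_max_left _ _)
            have h2 : dist y (xseq (ψ i)) ≤ dist y a + dist a (xseq (ψ i)) :=
              dist_triangle _ _ _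
            rw [dist_comm a _] at h2
            have h3 : dist ((xseq ∘ ψ) i) a = dist (xseq (ψ i)) a := rfl
            rw [h3] at h1
            linarith
          have hyn : Psi Mseq n y ∈ collUnion (𝓔 n) := hxseq (ψ i) hyball
          have hyn' : Psi Mseq n y ∈ collUnion (𝓔 m) := hdec m n hnm hyn
          have hPsim : Psi Mseq m y ∈ collUnion (𝓔 m) := (hchain m hm y n hnm).mp hyn'
          have hall : ∀ j, m ≤ j → Psi Mseq j y ∈ collUnion (𝓔 m) :=
            fun j hj => (hchain m hm y j hj).mpr hPsim
          exact (hclosedE m).mem_of_tendsto (hptwise y)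
            ((eventually_ge_atTop m).mono hall)
        intro m
        rcases le_or_gt K0 m with h | h
        · exact hmain m h
        · exact hdec m K0 h.le (hmain K0 le_rfl)
      have ha : a ∈ (∅ : Set M) := by
        rw [← hint]
        exact interior_maximal hclaim Metric.isOpen_ball
          (Metric.mem_ball_self (by positivity))
      exact ha

end
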